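/- arXiv:2503.14914 — 2 statements merged into one kernel-verified Lean document; each statement's English description precedes it below -/
import Mathlib

section
/- Let a_ξ, b_ξ (ξ ∈ ℤⁿ, n ≥ 2) be complex numbers such that for every decomposition ξ = ξ₁ + ξ₂ with ξ₁, ξ₂ ∈ ℤⁿ∖{0} one has ((1 − exp(−4π²T(|ξ₁|² + |ξ₂|²)))/(4π²(|ξ₁|² + |ξ₂|²)))·a_ξ + exp(−4π²T(|ξ₁|² + |ξ₂|²))·b_ξ = 0. Then a_ξ = b_ξ = 0 for every ξ ∈ ℤⁿ admitting two decompositions ξ = ξ₁+ξ₂ = ξ₁′+ξ₂′ with ξ₁,ξ₂,ξ₁′,ξ₂′ ∈ ℤⁿ∖{0} and |ξ₁|²+|ξ₂|² ≠ |ξ₁′|²+|ξ₂′|². -/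
/-- Squared Euclidean norm of an integer frequency vector. -/
noncomputable def nsq {n : ℕ} (ξ : Fin n → ℤ) : ℝ := ∑ i : Fin n, ((ξ i : ℝ))^2

lemma nsq_pos {n : ℕ} {ξ : Fin n → ℤ} (hξ : ξ ≠ 0) : 0 < nsq ξ := by
  obtain ⟨i, hi⟩ : ∃ i, ξ i ≠ 0 := by
    by_contra hc
    push_neg at hc
    exact hξ (funext hc)
  have hi' : ((ξ i : ℝ)) ≠ 0 := Int.cast_ne_zero.mpr hi
  refine Finset.sum_pos' (fun j _ => sq_nonneg _) ⟨i, Finset.mem_univ i, ?_⟩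
  positivity

lemma secant_lt (c : ℝ) (hc : 0 < c) {x y : ℝ} (hx : 0 < x) (hy : x < y) :
    (Real.exp (c*x) - 1)/x < (Real.exp (c*y) - 1)/y := by
  have key := strictConvexOn_exp.secant_strict_mono (a := 0) (x := c*x) (y := c*y)
    (Set.mem_univ _) (Set.mem_univ _) (Set.mem_univ _)
    (mul_pos hc hx).ne' (mul_pos hc (lt_trans hx hy)).ne' (mul_lt_mul_of_pos_left hy hc)
  simp only [Real.exp_zero, sub_zero] at key
  have hx' : x ≠ 0 := ne_of_gt hx
  have hy' : (0:ℝ) < y := lt_trans hx hy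
  have h1 : (Real.exp (c*x) - 1)/x = c * ((Real.exp (c*x) - 1)/(c*x)) := by
    field_simp
  have h2 : (Real.exp (c*y) - 1)/y = c * ((Real.exp (c*y) - 1)/(c*y)) := by
    field_simp
  rw [h1, h2]
  exact mul_lt_mul_of_pos_left key hc

/-- if the complex numbers `a_ξ, b_ξ` satisfy, for every decomposition
`ξ = ξ₁ + ξ₂` with `ξ₁, ξ₂ ∈ ℤⁿ∖{0}`, the relation
`((1 − e^{−4π²T(|ξ₁|²+|ξ₂|²)})/(4π²(|ξ₁|²+|ξ₂|²)))·a_ξ + e^{−4π²T(|ξ₁|²+|ξ₂|²)}·b_ξ = 0`,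
then `a_ξ = b_ξ = 0` for every `ξ` admitting two decompositions with different values of
`|ξ₁|² + |ξ₂|²`. -/
theorem stmt_4 (n : ℕ) (hn : 2 ≤ n) (T : ℝ) (hT : 0 < T)
    (a b : (Fin n → ℤ) → ℂ)
    (h : ∀ ξ ξ₁ ξ₂ : Fin n → ℤ, ξ₁ ≠ 0 → ξ₂ ≠ 0 → ξ = ξ₁ + ξ₂ →
      (((1 - Real.exp (-4 * Real.pi^2 * T * (nsq ξ₁ + nsq ξ₂))) /
          (4 * Real.pi^2 * (nsq ξ₁ + nsq ξ₂)) : ℝ) : ℂ) * a ξ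
        + ((Real.exp (-4 * Real.pi^2 * T * (nsq ξ₁ + nsq ξ₂)) : ℝ) : ℂ) * b ξ = 0) :
    ∀ ξ : Fin n → ℤ,
      (∃ ξ₁ ξ₂ ξ₁' ξ₂' : Fin n → ℤ, ξ₁ ≠ 0 ∧ ξ₂ ≠ 0 ∧ ξ₁' ≠ 0 ∧ ξ₂' ≠ 0 ∧
        ξ = ξ₁ + ξ₂ ∧ ξ = ξ₁' + ξ₂' ∧ nsq ξ₁ + nsq ξ₂ ≠ nsq ξ₁' + nsq ξ₂') →
      a ξ = 0 ∧ b ξ = 0 := by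
  intro ξ ⟨ξ₁, ξ₂, ξ₁', ξ₂', h1, h2, h1', h2', he, he', hne⟩
  have hπ : (0:ℝ) < Real.pi := Real.pi_pos
  set c : ℝ := 4 * Real.pi^2 * T with hc
  have hcpos : 0 < c := by positivity
  set s : ℝ := nsq ξ₁ + nsq ξ₂ with hs
  set s' : ℝ := nsq ξ₁' + nsq ξ₂' with hs'
  have hspos : 0 < s := add_pos (nsq_pos h1) (nsq_pos h2)
  have hs'pos : 0 < s' := add_pos (nsq_pos h1') (nsq_pos h2')
  have E1 := h ξ ξ₁ ξ₂ h1 h2 he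
  have E2 := h ξ ξ₁' ξ₂' h1' h2' he'
  rw [← hs] at E1
  rw [← hs'] at E2
  set f : ℝ → ℝ := fun t => (1 - Real.exp (-4 * Real.pi^2 * T * t)) / (4 * Real.pi^2 * t)
    with hfdef
  set g : ℝ → ℝ := fun t => Real.exp (-4 * Real.pi^2 * T * t) with hgdef
  have E1' : ((f s : ℝ) : ℂ) * a ξ + ((g s : ℝ) : ℂ) * b ξ = 0 := E1
  have E2' : ((f s' : ℝ) : ℂ) * a ξ + ((g s' : ℝ) : ℂ) * b ξ = 0 := E2
  have hgpos : ∀ t : ℝ, 0 < g t := fun t => Real.exp_pos _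
  have harg : ∀ t : ℝ, -4 * Real.pi^2 * T * t = -(c*t) := by
    intro t; rw [hc]; ring
  have hA : ∀ t : ℝ, 0 < t →
      f t * (4 * Real.pi^2 * t) * Real.exp (c*t) = Real.exp (c*t) - 1 := by
    intro t ht
    have hexp : Real.exp (c*t) ≠ 0 := (Real.exp_pos _).ne'
    simp only [hfdef]
    rw [harg t, Real.exp_neg]
    field_simp
  have hB : ∀ t : ℝ, g t * Real.exp (c*t) = 1 := by
    intro t
    simp only [hgdef]
    rw [harg t, Real.exp_neg]
    exact inv_mul_cancel₀ (Real.exp_pos _).ne'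
  have hdet : f s * g s' - f s' * g s ≠ 0 := by
    intro hcon
    have hP : (Real.exp (c*s) - 1)/s ≠ (Real.exp (c*s')-1)/s' := by
      rcases lt_or_gt_of_ne hne with hlt | hlt
      · exact ne_of_lt (secant_lt c hcpos hspos hlt)
      · exact ne_of_gt (secant_lt c hcpos hs'pos hlt)
    apply hP
    rw [div_eq_div_iff hspos.ne' hs'pos.ne']
    linear_combination (-s') * hA s hspos + s * hA s' hs'pos
      + (4*Real.pi^2*s*s') * (Real.exp (c*s) * Real.exp (c*s') * hcon
        - Real.exp (c*s) * f s * hB s' + Real.exp (c*s') * f s' * hB s)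
  have ha : a ξ = 0 := by
    have key : (((f s * g s' - f s' * g s : ℝ)) : ℂ) * a ξ = 0 := by
      push_cast
      linear_combination ((g s' : ℝ) : ℂ) * E1' - ((g s : ℝ) : ℂ) * E2'
    rcases mul_eq_zero.mp key with hk | hk
    · exact absurd (Complex.ofReal_eq_zero.mp hk) hdet
    · exact hk
  refine ⟨ha, ?_⟩
  have hb : ((g s : ℝ) : ℂ) * b ξ = 0 := by
    rw [ha, mul_zero, zero_add] at E1'
    exact E1'
  rcases mul_eq_zero.mp hb with hk | hk
  · exact absurd (Complex.ofReal_eq_zero.mp hk) (hgpos s).ne'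
  · exact hk
end

section
/- Let β > 0 and c ≥ 0 be real numbers, set λ = √(β² + cβ) and k = β − λ. Then k ≤ 0, c + k ≥ 0, and k + (c+k)β/λ = 0. Consequently, if m̄ : Ω → ℝ satisfies −Δm̄ = β m̄ with Neumann boundary condition, then the pair (u,m) with u(x,t) = ((c+k)/λ)·e^{−λt}·m̄(x) and m(x,t) = e^{−λt}·m̄(x) solves the coupled system −∂_t u − Δu = c·m and ∂_t m − Δm − Δu = 0 in Ω × (0,T), with ∂_ν u = ∂_ν m = 0 on ∂Ω × (0,T). -/
/-- Partial derivative in the `i`-th coordinate direction. -/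
noncomputable def pd {n : ℕ} (i : Fin n) (f : (Fin n → ℝ) → ℝ) (x : Fin n → ℝ) : ℝ :=
  deriv (fun s => f (Function.update x i s)) (x i)

/-- Laplacian (sum of repeated coordinate partials). -/
noncomputable def lap {n : ℕ} (f : (Fin n → ℝ) → ℝ) (x : Fin n → ℝ) : ℝ :=
  ∑ i : Fin n, pd i (fun y => pd i f y) x


lemma pd_const_mul {n : ℕ} (i : Fin n) (C : ℝ) (f : (Fin n → ℝ) → ℝ) (x : Fin n → ℝ) :
    pd i (fun y => C * f y) x = C * pd i f x := by
  unfold pd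
  exact deriv_const_mul_field C

lemma lap_const_mul {n : ℕ} (C : ℝ) (f : (Fin n → ℝ) → ℝ) (x : Fin n → ℝ) :
    lap (fun y => C * f y) x = C * lap f x := by
  unfold lap
  simp only [pd_const_mul]
  rw [Finset.mul_sum]

/-- for `β > 0`, `c ≥ 0`, `λ = √(β² + cβ)` and `k = β − λ` one has `k ≤ 0`,
`c + k ≥ 0` and `k + (c+k)β/λ = 0`; consequently, if `−Δm̄ = β m̄` on `Ω` then
`u(x,t) = ((c+k)/λ)e^{−λt}m̄(x)` and `m(x,t) = e^{−λt}m̄(x)` solve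
`−∂_t u − Δu = c·m` and `∂_t m − Δm − Δu = 0` on `Ω × (0,T)`. -/
theorem stmt_6 (n : ℕ) (Ω : Set (Fin n → ℝ)) (T : ℝ) (hT : 0 < T)
    (β c : ℝ) (hβ : 0 < β) (hc : 0 ≤ c)
    (mbar : (Fin n → ℝ) → ℝ) (hmbar : ContDiff ℝ 2 mbar)
    (heig : ∀ x ∈ Ω, -(lap mbar x) = β * mbar x) :
    Real.sqrt (β^2 + c*β) > 0 ∧
    β - Real.sqrt (β^2 + c*β) ≤ 0 ∧
    0 ≤ c + (β - Real.sqrt (β^2 + c*β)) ∧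
    (β - Real.sqrt (β^2 + c*β))
      + (c + (β - Real.sqrt (β^2 + c*β))) * β / Real.sqrt (β^2 + c*β) = 0 ∧
    (∀ u m : (Fin n → ℝ) → ℝ → ℝ,
      u = (fun (y : Fin n → ℝ) (s : ℝ) =>
        ((c + (β - Real.sqrt (β^2 + c*β))) / Real.sqrt (β^2 + c*β))
          * Real.exp (-(Real.sqrt (β^2 + c*β)) * s) * mbar y) →
      m = (fun (y : Fin n → ℝ) (s : ℝ) =>
        Real.exp (-(Real.sqrt (β^2 + c*β)) * s) * mbar y) →
      ∀ x ∈ Ω, ∀ t ∈ Set.Ioo (0:ℝ) T,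
        (-(deriv (fun s => u x s) t) - lap (fun y => u y t) x = c * m x t) ∧
        (deriv (fun s => m x s) t - lap (fun y => m y t) x - lap (fun y => u y t) x = 0)) := by
  have h2 : (0:ℝ) < β^2 + c*β := by nlinarith
  set L := Real.sqrt (β^2 + c*β) with hLdef
  have hLpos : 0 < L := Real.sqrt_pos.mpr h2
  have hLne : L ≠ 0 := ne_of_gt hLpos
  have hLsq : L^2 = β^2 + c*β := Real.sq_sqrt h2.le
  have hβL : β ≤ L := by
    have h := Real.sqrt_le_sqrt (show β^2 ≤ β^2 + c*β by nlinarith)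
    rwa [Real.sqrt_sq hβ.le] at h
  have hLβc : L ≤ β + c := by
    have h := Real.sqrt_le_sqrt (show β^2 + c*β ≤ (β+c)^2 by nlinarith)
    rwa [Real.sqrt_sq (by linarith)] at h
  have hAc : (c + (β - L)) / L * (L + β) = c := by
    field_simp
    nlinarith [hLsq]
  have hBc : -L + β + β * ((c + (β - L)) / L) = 0 := by
    field_simp
    nlinarith [hLsq]
  refine ⟨hLpos, by linarith, by linarith, by field_simp; nlinarith [hLsq], ?_⟩
  intro u m hu hm x hx t ht
  subst hu hm
  have hml : lap mbar x = -(β * mbar x) := by linarith [heig x hx]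
  have h1 : HasDerivAt (fun s : ℝ => -L * s) (-L) t := by
    simpa using (hasDerivAt_id t).const_mul (-L)
  have hdu : deriv (fun s => (c + (β - L)) / L * Real.exp (-L * s) * mbar x) t
      = (c + (β - L)) / L * (Real.exp (-L * t) * (-L)) * mbar x :=
    (((h1.exp).const_mul ((c + (β - L)) / L)).mul_const (mbar x)).deriv
  have hdm : deriv (fun s => Real.exp (-L * s) * mbar x) t
      = Real.exp (-L * t) * (-L) * mbar x :=
    ((h1.exp).mul_const (mbar x)).deriv
  have hlu : lap (fun y => (c + (β - L)) / L * Real.exp (-L * t) * mbar y) x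
      = (c + (β - L)) / L * Real.exp (-L * t) * lap mbar x :=
    lap_const_mul _ _ _
  have hlm : lap (fun y => Real.exp (-L * t) * mbar y) x
      = Real.exp (-L * t) * lap mbar x :=
    lap_const_mul _ _ _
  refine ⟨?_, ?_⟩
  · rw [hdu, hlu, hml]
    linear_combination Real.exp (-L * t) * mbar x * hAc
  · rw [hdm, hlm, hlu, hml]
    linear_combination Real.exp (-L * t) * mbar x * hBc
end
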